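/- Let Σ be a finite alphabet with |Σ| = k, and let U and V be commutative group languages over Σ recognized by DFAs with n and m states, respectively. Then the shuffle U ⧢ V is recognized by a DFA with at most (nm)^k states. -/

import Mathlib

open List

def IsCommutativeLang {α : Type} (L : Language α) : Prop :=
  ∀ u v : List α, u ~ v → (u ∈ L ↔ v ∈ L)

def UpClosure {α : Type} (L : Language α) : Language α :=
  {v | ∃ u ∈ L, u <+ v}

def DownClosure {α : Type} (L : Language α) : Language α :=
  {u | ∃ v ∈ L, u <+ v}

def UpInterior {α : Type} (L : Language α) : Language α :=
  {w | ∃ U : Language α, (∀ x ∈ U, x ∈ L) ∧ UpClosure U = U ∧ w ∈ U}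

def DownInterior {α : Type} (L : Language α) : Language α :=
  {w | ∃ U : Language α, (∀ x ∈ U, x ∈ L) ∧ DownClosure U = U ∧ w ∈ U}

def RecognizedBy {α : Type} (L : Language α) (n : ℕ) : Prop :=
  ∃ (σ : Type) (_ : Fintype σ) (M : DFA α σ), Fintype.card σ = n ∧ M.accepts = L

noncomputable def sc {α : Type} (L : Language α) : ℕ :=
  sInf {n | RecognizedBy L n}

def Nerode {α : Type} (L : Language α) (u v : List α) : Prop :=
  ∀ x : List α, u ++ x ∈ L ↔ v ++ x ∈ L

inductive IsShuffle {α : Type} : List α → List α → List α → Prop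
  | nil : IsShuffle [] [] []
  | left (x : α) {u v w : List α} : IsShuffle u v w → IsShuffle (x :: u) v (x :: w)
  | right (y : α) {u v w : List α} : IsShuffle u v w → IsShuffle u (y :: v) (y :: w)

def Shuffle {α : Type} (U V : Language α) : Language α :=
  {w | ∃ u ∈ U, ∃ v ∈ V, IsShuffle u v w}

def IsPermDFA {α σ : Type} (M : DFA α σ) : Prop :=
  ∀ a : α, Function.Bijective fun q => M.step q a

def IsGroupLang {α : Type} (L : Language α) : Prop :=
  ∃ (σ : Type) (_ : Fintype σ) (M : DFA α σ), IsPermDFA M ∧ M.accepts = L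

def wpow {α : Type} (w : List α) (n : ℕ) : List α :=
  (List.replicate n w).flatten

def IsAperiodicDFA {α σ : Type} (M : DFA α σ) : Prop :=
  ∀ (q : σ) (w : List α) (n : ℕ), 1 ≤ n → M.evalFrom q (wpow w n) = q → M.evalFrom q w = q

def IsAperiodicLang {α : Type} (L : Language α) : Prop :=
  ∃ (σ : Type) (_ : Fintype σ) (M : DFA α σ), IsAperiodicDFA M ∧ M.accepts = L

def ShuffleList {α : Type} : List (Language α) → Language α
  | [] => {([] : List α)}
  | L :: Ls => Shuffle L (ShuffleList Ls)

def UnaryGroupLang {α : Type} (a : α) (U : Language α) : Prop :=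
  (∀ w ∈ U, ∀ x ∈ w, x = a) ∧
  ∃ (σ : Type) (_ : Fintype σ) (M : DFA Unit σ), IsPermDFA M ∧
    ∀ n : ℕ, (List.replicate n a ∈ U ↔ List.replicate n () ∈ M.accepts)

def UnaryAperiodicLang {α : Type} (a : α) (U : Language α) : Prop :=
  (∀ w ∈ U, ∀ x ∈ w, x = a) ∧
  ∃ (σ : Type) (_ : Fintype σ) (M : DFA Unit σ), IsAperiodicDFA M ∧
    ∀ n : ℕ, (List.replicate n a ∈ U ↔ List.replicate n () ∈ M.accepts)

/-- Chicken McNugget: every `s ≥ (p-1)(q-1)` is representable over coprime `p, q`. -/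
lemma my_mcnugget {p q : ℕ} (hp : 0 < p) (hq : 0 < q) (hpq : Nat.Coprime p q) {s : ℕ}
    (hs : (p - 1) * (q - 1) ≤ s) : ∃ i j, s = i * p + j * q := by
  rcases eq_or_lt_of_le (Nat.one_le_iff_ne_zero.mpr hp.ne') with h1 | h1
  · exact ⟨s, 0, by simp [← h1]⟩
  rcases eq_or_lt_of_le (Nat.one_le_iff_ne_zero.mpr hq.ne') with h2 | h2
  · exact ⟨0, s, by simp [← h2]⟩
  have hF := frobeniusNumber_pair hpq h1 h2
  have hmem : s ∈ AddSubmonoid.closure ({p, q} : Set ℕ) := by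
    by_contra hns
    have hle := hF.2 hns
    obtain ⟨p', rfl⟩ : ∃ p', p = p' + 2 := ⟨p - 2, by omega⟩
    obtain ⟨q', rfl⟩ : ∃ q', q = q' + 2 := ⟨q - 2, by omega⟩
    have e1 : (p' + 2) * (q' + 2) = p' * q' + 2 * p' + 2 * q' + 4 := by ring
    have e2 : (p' + 2 - 1) * (q' + 2 - 1) = p' * q' + p' + q' + 1 := by
      simp [Nat.add_sub_cancel]; ring
    omega
  rw [AddSubmonoid.mem_closure_pair] at hmem
  obtain ⟨i, j, hij⟩ := hmem
  exact ⟨i, j, by simpa [smul_eq_mul] using hij.symm⟩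

/-- Periodicity in the first argument extends to multiples. -/
lemma R_add_mul {d : ℕ} {R : ℕ → ℕ → Prop} (hR : ∀ x y, R (x + d) y ↔ R x y) :
    ∀ (k x y : ℕ), R (x + k * d) y ↔ R x y := by
  intro k
  induction k with
  | zero => simp
  | succ k ih =>
    intro x y
    have : x + (k + 1) * d = (x + k * d) + d := by ring
    rw [this, hR, ih]

lemma R_mod {d : ℕ} (hd : 0 < d) {R : ℕ → ℕ → Prop} (hR : ∀ x y, R (x + d) y ↔ R x y)
    (x y : ℕ) : R x y ↔ R (x % d) y := by
  conv_lhs => rw [← Nat.mod_add_div' x d]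
  rw [R_add_mul hR]

/-- One direction of the key periodicity lemma for sumsets. -/
lemma key_one (g d' e' : ℕ) (hg : 0 < g) (hd' : 0 < d') (he' : 0 < e')
    (hcop : Nat.Coprime d' e') (R : ℕ → ℕ → Prop)
    (hR1 : ∀ x y, R (x + g * d') y ↔ R x y) (hR2 : ∀ x y, R x (y + g * e') ↔ R x y)
    {c₁ c₂ : ℕ} (h2 : g * d' * e' + g ≤ c₂ + 2)
    (hmod : c₁ % g = c₂ % g) :
    (∃ x y, x + y = c₁ ∧ R x y) → (∃ x y, x + y = c₂ ∧ R x y) := by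
  rintro ⟨x, y, rfl, hR⟩
  have hd : 0 < g * d' := Nat.mul_pos hg hd'
  have he : 0 < g * e' := Nat.mul_pos hg he'
  set α := x % (g * d') with hα
  set β := y % (g * e') with hβ
  have hRαβ : R α β := by
    have h1 : R x β := (R_mod he (R := fun a b => R b a) (fun u v => hR2 v u) y x).mp hR
    exact (R_mod hd hR1 x β).mp h1
  have hαlt : α + 1 ≤ g * d' := Nat.mod_lt _ hd
  have hβlt : β + 1 ≤ g * e' := Nat.mod_lt _ he
  -- c₂ ≡ α + β [MOD g]
  have hxα : x ≡ α [MOD g] := ((Nat.mod_modEq x (g * d')).of_dvd ⟨d', rfl⟩).symm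
  have hyβ : y ≡ β [MOD g] := ((Nat.mod_modEq y (g * e')).of_dvd ⟨e', rfl⟩).symm
  have hc2 : c₂ ≡ α + β [MOD g] :=
    (Nat.ModEq.symm (hmod : Nat.ModEq g (x + y) c₂)).trans (hxα.add hyβ)
  obtain ⟨p, rfl⟩ : ∃ p, d' = p + 1 := ⟨d' - 1, by omega⟩
  obtain ⟨q, rfl⟩ : ∃ q, e' = q + 1 := ⟨e' - 1, by omega⟩
  -- threshold : α + β + g * (p * q) ≤ c₂ and hence g ∣ c₂ - (α+β) with big quotient
  have hthr : α + β + g * (p * q) + 2 ≤ c₂ + 2 := by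
    have e3 : g * (p + 1) + g * (q + 1) + g * (p * q) = g * (p + 1) * (q + 1) + g := by ring
    omega
  have hle : α + β ≤ c₂ := by omega
  have hdvd : g ∣ c₂ - (α + β) := (Nat.modEq_iff_dvd' hle).mp hc2.symm
  obtain ⟨s, hsval⟩ := hdvd
  have hs : p * q ≤ s := by
    have : g * (p * q) ≤ g * s := by omega
    exact Nat.le_of_mul_le_mul_left this hg
  have hs' : ((p + 1) - 1) * ((q + 1) - 1) ≤ s := by simpa using hs
  obtain ⟨i, j, rfl⟩ := my_mcnugget (by omega : 0 < p + 1) (by omega : 0 < q + 1) hcop hs'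
  refine ⟨α + i * (g * (p + 1)), β + j * (g * (q + 1)), ?_, ?_⟩
  · have e4 : g * (i * (p + 1) + j * (q + 1)) = i * (g * (p + 1)) + j * (g * (q + 1)) := by ring
    omega
  · have t2 : R α (β + j * (g * (q + 1))) :=
      (R_add_mul (R := fun a b => R b a) (fun u v => hR2 v u) j β α).mpr hRαβ
    exact (R_add_mul hR1 i _ _).mpr t2

lemma key_lemma (g d' e' : ℕ) (hg : 0 < g) (hd' : 0 < d') (he' : 0 < e')
    (hcop : Nat.Coprime d' e') (R : ℕ → ℕ → Prop)
    (hR1 : ∀ x y, R (x + g * d') y ↔ R x y) (hR2 : ∀ x y, R x (y + g * e') ↔ R x y)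
    {c₁ c₂ : ℕ} (h1 : g * d' * e' + g ≤ c₁ + 2) (h2 : g * d' * e' + g ≤ c₂ + 2)
    (hmod : c₁ % g = c₂ % g) :
    (∃ x y, x + y = c₁ ∧ R x y) ↔ (∃ x y, x + y = c₂ ∧ R x y) :=
  ⟨key_one g d' e' hg hd' he' hcop R hR1 hR2 h2 hmod,
   key_one g d' e' hg hd' he' hcop R hR1 hR2 h1 hmod.symm⟩

/-! ### counter function -/

def myrho (T g c : ℕ) : ℕ := if c < T + g then c else T + (c - T) % g

lemma myrho_lt (T g c : ℕ) (hg : 0 < g) : myrho T g c < T + g := by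
  unfold myrho
  split
  · assumption
  · have := Nat.mod_lt (c - T) hg
    omega

lemma myrho_spec (T g c : ℕ) : myrho T g c = c ∨
    (T ≤ myrho T g c ∧ T ≤ c ∧ myrho T g c % g = c % g) := by
  unfold myrho
  split
  · exact Or.inl rfl
  · rename_i h
    right
    refine ⟨by omega, by omega, ?_⟩
    have hc : T ≤ c := by omega
    have e : (T + (c - T) % g) % g = (T + (c - T)) % g :=
      Nat.ModEq.add_left T (Nat.mod_modEq _ g)
    rw [e, Nat.add_sub_cancel' hc]

lemma myrho_succ (T g c : ℕ) (hg : 0 < g) : myrho T g (myrho T g c + 1) = myrho T g (c + 1) := by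
  unfold myrho
  by_cases h1 : c < T + g
  · simp [h1]
  · have hc : T ≤ c := by omega
    have hr : (c - T) % g < g := Nat.mod_lt _ hg
    simp only [if_neg h1]
    have h2 : ¬ c + 1 < T + g := by omega
    rw [if_neg h2]
    have hsub : c + 1 - T = (c - T) + 1 := by omega
    rw [hsub]
    rcases eq_or_lt_of_le (Nat.one_le_iff_ne_zero.mpr (Nat.pos_iff_ne_zero.mp hg)) with hg1 | hg2
    · -- g = 1
      have : g = 1 := hg1.symm
      subst this
      simp [Nat.mod_one]
    · have h1g : 1 % g = 1 := Nat.mod_eq_of_lt hg2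
      by_cases h3 : (c - T) % g + 1 < g
      · have h4 : T + (c - T) % g + 1 < T + g := by omega
        rw [if_pos h4]
        have e : ((c - T) + 1) % g = (c - T) % g + 1 := by
          rw [Nat.add_mod, h1g, Nat.mod_eq_of_lt h3]
        rw [e]
        omega
      · have h4 : (c - T) % g + 1 = g := by omega
        have h5 : ¬ T + (c - T) % g + 1 < T + g := by omega
        rw [if_neg h5]
        have e1 : T + (c - T) % g + 1 - T = g := by omega
        have e2 : ((c - T) + 1) % g = 0 := by
          rw [Nat.add_mod, h1g, h4, Nat.mod_self]
        rw [e1, e2, Nat.mod_self]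

section Words
variable {α : Type} [Fintype α] [DecidableEq α]

/-- canonical word with given letter counts -/
noncomputable def cword (c : α → ℕ) : List α :=
  (Finset.univ.toList (α := α)).flatMap fun a => List.replicate (c a) a

lemma count_flatMap_replicate (c : α → ℕ) (b : α) :
    ∀ l : List α, l.Nodup → (l.flatMap fun a => List.replicate (c a) a).count b
      = if b ∈ l then c b else 0 := by
  intro l
  induction l with
  | nil => simp
  | cons a l ih =>
    intro hnd
    rw [List.flatMap_cons, List.count_append, List.count_replicate, ih (List.nodup_cons.mp hnd).2]
    rcases eq_or_ne a b with rfl | hab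
    · have : a ∉ l := (List.nodup_cons.mp hnd).1
      simp [this]
    · simp [hab, Ne.symm hab]

lemma count_cword (c : α → ℕ) (b : α) : (cword c).count b = c b := by
  rw [cword, count_flatMap_replicate c b _ (Finset.nodup_toList _)]
  simp

lemma perm_cword (w : List α) : w ~ cword (fun a => w.count a) :=
  List.perm_iff_count.2 fun a => by rw [count_cword]

lemma isShuffleX_count {u v w : List α} (h : IsShuffle u v w) (a : α) :
    w.count a = u.count a + v.count a := by
  induction h with
  | nil => simp
  | left x h ih => simp [List.count_cons, ih]; omega
  | right y h ih => simp [List.count_cons, ih]; omega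

lemma exists_isShuffleX_of_counts :
    ∀ (w : List α) (x y : α → ℕ), (∀ a, x a + y a = w.count a) →
    ∃ u v, IsShuffle u v w ∧ (∀ a, u.count a = x a) ∧ (∀ a, v.count a = y a) := by
  intro w
  induction w with
  | nil =>
    intro x y h
    refine ⟨[], [], IsShuffle.nil, fun a => ?_, fun a => ?_⟩ <;>
      · have := h a; simp at this ⊢; omega
  | cons b w ih =>
    intro x y h
    rcases Nat.eq_zero_or_pos (x b) with hxb | hxb
    · -- y b > 0
      have hyb : 0 < y b := by have := h b; simp [List.count_cons] at this; omega
      obtain ⟨u, v, hs, hu, hv⟩ := ih x (Function.update y b (y b - 1)) (fun a => by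
        rcases eq_or_ne a b with rfl | hab
        · have := h a; simp [List.count_cons] at this ⊢; omega
        · have := h a; simp [List.count_cons, Ne.symm hab, Function.update_of_ne hab] at this ⊢
          omega)
      refine ⟨u, b :: v, IsShuffle.right b hs, hu, fun a => ?_⟩
      rcases eq_or_ne a b with rfl | hab
      · simp [List.count_cons, hv a, Function.update_self]; omega
      · simp [List.count_cons, Ne.symm hab, hv a, Function.update_of_ne hab]
    · obtain ⟨u, v, hs, hu, hv⟩ := ih (Function.update x b (x b - 1)) y (fun a => by
        rcases eq_or_ne a b with rfl | hab
        · have := h a; simp [List.count_cons] at this ⊢; omega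
        · have := h a; simp [List.count_cons, Ne.symm hab, Function.update_of_ne hab] at this ⊢
          omega)
      refine ⟨b :: u, v, IsShuffle.left b hs, fun a => ?_, hv⟩
      rcases eq_or_ne a b with rfl | hab
      · simp [List.count_cons, hu a, Function.update_self]; omega
      · simp [List.count_cons, Ne.symm hab, hu a, Function.update_of_ne hab]

end Words

/-- pigeonhole: some positive iterate of a bijection fixes `q`. -/
lemma exists_iterate_period {σ : Type} [Fintype σ] (f : σ → σ) (hf : Function.Bijective f)
    (q : σ) : ∃ d, 0 < d ∧ d ≤ Fintype.card σ ∧ f^[d] q = q := by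
  have hcard : Fintype.card σ < Fintype.card (Fin (Fintype.card σ + 1)) := by simp
  obtain ⟨i, j, hne, heq⟩ := Fintype.exists_ne_map_eq_of_card_lt
    (fun i : Fin (Fintype.card σ + 1) => f^[(i : ℕ)] q) hcard
  wlog hij : (i : ℕ) < (j : ℕ) generalizing i j
  · refine this j i hne.symm heq.symm ?_
    rcases Nat.lt_or_ge (j : ℕ) (i : ℕ) with h' | h'
    · exact h'
    · exact absurd (Fin.ext (by omega)) hne
  refine ⟨(j : ℕ) - (i : ℕ), by omega, by have := j.isLt; omega, ?_⟩
  have h1 : f^[(i : ℕ)] (f^[(j : ℕ) - (i : ℕ)] q) = f^[(i : ℕ)] q := by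
    rw [← Function.iterate_add_apply]
    have : (i : ℕ) + ((j : ℕ) - (i : ℕ)) = (j : ℕ) := by omega
    rw [this]
    exact heq.symm
  exact (Function.Injective.iterate hf.1 (i : ℕ)) h1

lemma evalFrom_replicate {α σ : Type} (M : DFA α σ) (a : α) :
    ∀ (k : ℕ) (s : σ), M.evalFrom s (List.replicate k a) = (fun q => M.step q a)^[k] s := by
  intro k
  induction k with
  | zero => intro s; simp [DFA.evalFrom]
  | succ k ih =>
    intro s
    rw [List.replicate_succ]
    show M.evalFrom (M.step s a) (List.replicate k a) = _
    rw [ih, Function.iterate_succ_apply]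

/-- the shuffle of commutative group languages recognized by
(permutation) DFAs with `n` and `m` states is recognized by a DFA with at most
`(n m) ^ k` states, `k` the alphabet size. -/
theorem shuffle_group_state_bound {α : Type} [Fintype α] (k n m : ℕ)
    (hk : Fintype.card α = k) (U V : Language α)
    (hcU : IsCommutativeLang U) (hcV : IsCommutativeLang V)
    (hU : ∃ (σ : Type) (_ : Fintype σ) (M : DFA α σ),
      IsPermDFA M ∧ Fintype.card σ = n ∧ M.accepts = U)
    (hV : ∃ (σ : Type) (_ : Fintype σ) (M : DFA α σ),
      IsPermDFA M ∧ Fintype.card σ = m ∧ M.accepts = V) :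
    ∃ (τ : Type) (_ : Fintype τ) (M' : DFA α τ),
      Fintype.card τ ≤ (n * m) ^ k ∧ M'.accepts = Shuffle U V := by
  classical
  obtain ⟨σ₁, i1, M1, hperm1, hcard1, hacc1⟩ := hU
  obtain ⟨σ₂, i2, M2, hperm2, hcard2, hacc2⟩ := hV
  -- per-letter periods of the two permutation automata
  have hdex : ∀ a : α, ∃ dd, 0 < dd ∧ dd ≤ n ∧
      M1.evalFrom M1.start (List.replicate dd a) = M1.start := by
    intro a
    obtain ⟨dd, h0, hle, hfix⟩ := exists_iterate_period (fun q => M1.step q a) (hperm1 a) M1.start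
    exact ⟨dd, h0, hcard1 ▸ hle, by rw [evalFrom_replicate]; exact hfix⟩
  have heex : ∀ a : α, ∃ ee, 0 < ee ∧ ee ≤ m ∧
      M2.evalFrom M2.start (List.replicate ee a) = M2.start := by
    intro a
    obtain ⟨ee, h0, hle, hfix⟩ := exists_iterate_period (fun q => M2.step q a) (hperm2 a) M2.start
    exact ⟨ee, h0, hcard2 ▸ hle, by rw [evalFrom_replicate]; exact hfix⟩
  choose d hd0 hdn hdfix using hdex
  choose e he0 hem hefix using heex
  set g : α → ℕ := fun a => Nat.gcd (d a) (e a) with hgdef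
  have hg0 : ∀ a, 0 < g a := fun a => Nat.gcd_pos_of_pos_left _ (hd0 a)
  have hfac : ∀ a : α, ∃ d' e', d a = g a * d' ∧ e a = g a * e' ∧ Nat.Coprime d' e'
      ∧ 0 < d' ∧ 0 < e' := by
    intro a
    refine ⟨d a / g a, e a / g a,
      (Nat.mul_div_cancel' (Nat.gcd_dvd_left _ _)).symm,
      (Nat.mul_div_cancel' (Nat.gcd_dvd_right _ _)).symm,
      Nat.coprime_div_gcd_div_gcd (hg0 a), ?_, ?_⟩
    · exact Nat.div_pos (Nat.le_of_dvd (hd0 a) (Nat.gcd_dvd_left _ _)) (hg0 a)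
    · exact Nat.div_pos (Nat.le_of_dvd (he0 a) (Nat.gcd_dvd_right _ _)) (hg0 a)
  choose d' e' hdfac hefac hcop hd'0 he'0 using hfac
  set T : α → ℕ := fun a => g a * d' a * e' a + g a - 2 with hTdef
  have hT2 : ∀ a, T a + 2 = g a * d' a * e' a + g a := by
    intro a
    have h1 := Nat.mul_pos (Nat.mul_pos (hg0 a) (hd'0 a)) (he'0 a)
    have h2 := hg0 a
    simp only [hTdef]
    omega
  -- membership predicates on count vectors
  set F : (α → ℕ) → Prop := fun c => cword c ∈ U with hFdef
  set G : (α → ℕ) → Prop := fun c => cword c ∈ V with hGdef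
  have hmemU : ∀ w : List α, w ∈ U ↔ F (fun a => w.count a) :=
    fun w => hcU _ _ (perm_cword w)
  have hmemV : ∀ w : List α, w ∈ V ↔ G (fun a => w.count a) :=
    fun w => hcV _ _ (perm_cword w)
  -- periodicity of F and G in each coordinate
  have hFper : ∀ (a : α) (x : α → ℕ), F (Function.update x a (x a + d a)) ↔ F x := by
    intro a x
    have hperm : cword (Function.update x a (x a + d a)) ~ List.replicate (d a) a ++ cword x := by
      rw [List.perm_iff_count]
      intro b
      rw [count_cword, List.count_append, count_cword, List.count_replicate]
      rcases eq_or_ne a b with rfl | hab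
      · simp [Nat.add_comm]
      · simp [Function.update_of_ne (Ne.symm hab), hab]
    have h1 := hcU _ _ hperm
    have h2 : List.replicate (d a) a ++ cword x ∈ U ↔ cword x ∈ U := by
      rw [← hacc1, DFA.mem_accepts, DFA.mem_accepts]
      show M1.evalFrom M1.start _ ∈ _ ↔ M1.evalFrom M1.start _ ∈ _
      rw [DFA.evalFrom_of_append, hdfix]
    exact h1.trans h2
  have hGper : ∀ (a : α) (y : α → ℕ), G (Function.update y a (y a + e a)) ↔ G y := by
    intro a y
    have hperm : cword (Function.update y a (y a + e a)) ~ List.replicate (e a) a ++ cword y := by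
      rw [List.perm_iff_count]
      intro b
      rw [count_cword, List.count_append, count_cword, List.count_replicate]
      rcases eq_or_ne a b with rfl | hab
      · simp [Nat.add_comm]
      · simp [Function.update_of_ne (Ne.symm hab), hab]
    have h1 := hcV _ _ hperm
    have h2 : List.replicate (e a) a ++ cword y ∈ V ↔ cword y ∈ V := by
      rw [← hacc2, DFA.mem_accepts, DFA.mem_accepts]
      show M2.evalFrom M2.start _ ∈ _ ↔ M2.evalFrom M2.start _ ∈ _
      rw [DFA.evalFrom_of_append, hefix]
    exact h1.trans h2
  -- the sum predicate on count vectors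
  set S : (α → ℕ) → Prop :=
    fun c => ∃ x y : α → ℕ, (∀ b, x b + y b = c b) ∧ F x ∧ G y with hSdef
  -- invariance of S under replacing one coordinate by a congruent large value
  have hSupd : ∀ (c : α → ℕ) (a : α) (v : ℕ),
      T a ≤ v → T a ≤ c a → v % g a = c a % g a →
      (S (Function.update c a v) ↔ S c) := by
    intro c a v hv1 hv2 hv3
    set R : ℕ → ℕ → Prop := fun xa ya => ∃ x y : α → ℕ, F x ∧ G y ∧ x a = xa ∧ y a = ya ∧
      ∀ b, b ≠ a → x b + y b = c b with hRdef
    have hRd : ∀ xa ya, R (xa + d a) ya ↔ R xa ya := by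
      intro xa ya
      constructor
      · rintro ⟨x, y, hFx, hGy, hxa, hya, hrest⟩
        refine ⟨Function.update x a xa, y, ?_, hGy, Function.update_self _ _ _, hya,
          fun b hb => by rw [Function.update_of_ne hb]; exact hrest b hb⟩
        have h := hFper a (Function.update x a xa)
        rw [Function.update_self] at h
        have hxx : Function.update (Function.update x a xa) a (xa + d a) = x := by
          funext b
          rcases eq_or_ne b a with rfl | hb
          · rw [Function.update_self, hxa]
          · rw [Function.update_of_ne hb, Function.update_of_ne hb]
        rw [hxx] at h
        exact h.mp hFx
      · rintro ⟨x, y, hFx, hGy, hxa, hya, hrest⟩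
        refine ⟨Function.update x a (xa + d a), y, ?_, hGy, Function.update_self _ _ _, hya,
          fun b hb => by rw [Function.update_of_ne hb]; exact hrest b hb⟩
        have h := hFper a x
        rw [hxa] at h
        exact h.mpr hFx
    have hRe : ∀ xa ya, R xa (ya + e a) ↔ R xa ya := by
      intro xa ya
      constructor
      · rintro ⟨x, y, hFx, hGy, hxa, hya, hrest⟩
        refine ⟨x, Function.update y a ya, hFx, ?_, hxa, Function.update_self _ _ _,
          fun b hb => by rw [Function.update_of_ne hb]; exact hrest b hb⟩
        have h := hGper a (Function.update y a ya)
        rw [Function.update_self] at h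
        have hyy : Function.update (Function.update y a ya) a (ya + e a) = y := by
          funext b
          rcases eq_or_ne b a with rfl | hb
          · rw [Function.update_self, hya]
          · rw [Function.update_of_ne hb, Function.update_of_ne hb]
        rw [hyy] at h
        exact h.mp hGy
      · rintro ⟨x, y, hFx, hGy, hxa, hya, hrest⟩
        refine ⟨x, Function.update y a (ya + e a), hFx, ?_, hxa, Function.update_self _ _ _,
          fun b hb => by rw [Function.update_of_ne hb]; exact hrest b hb⟩
        have h := hGper a y
        rw [hya] at h
        exact h.mpr hGy
    have hSv : ∀ u : ℕ, (S (Function.update c a u) ↔ ∃ xa ya, xa + ya = u ∧ R xa ya) := by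
      intro u
      constructor
      · rintro ⟨x, y, hsum, hFx, hGy⟩
        refine ⟨x a, y a, ?_, x, y, hFx, hGy, rfl, rfl, fun b hb => ?_⟩
        · have := hsum a; rwa [Function.update_self] at this
        · have := hsum b; rwa [Function.update_of_ne hb] at this
      · rintro ⟨xa, ya, hxy, x, y, hFx, hGy, hxa, hya, hrest⟩
        refine ⟨x, y, fun b => ?_, hFx, hGy⟩
        rcases eq_or_ne b a with rfl | hb
        · rw [Function.update_self, hxa, hya]; exact hxy
        · rw [Function.update_of_ne hb]; exact hrest b hb
    have hkey := key_lemma (g a) (d' a) (e' a) (hg0 a) (hd'0 a) (he'0 a) (hcop a) R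
      (by rw [← hdfac a]; exact hRd) (by rw [← hefac a]; exact hRe)
      (c₁ := v) (c₂ := c a)
      (by have := hT2 a; omega) (by have := hT2 a; omega) hv3
    have hfin : Function.update c a (c a) = c := Function.update_eq_self _ _
    rw [hSv v, hkey, ← hSv (c a), hfin]
  -- invariance of S under the counter normalization, all coordinates
  have hSrho : ∀ c : α → ℕ, (S (fun a => myrho (T a) (g a) (c a)) ↔ S c) := by
    intro c
    suffices h : ∀ l : List α,
        (S (fun b => if b ∈ l then myrho (T b) (g b) (c b) else c b) ↔ S c) by
      have h2 := h Finset.univ.toList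
      simpa [Finset.mem_toList] using h2
    intro l
    induction l with
    | nil => simp
    | cons a l ih =>
      have hfun : (fun b => if b ∈ a :: l then myrho (T b) (g b) (c b) else c b)
          = Function.update (fun b => if b ∈ l then myrho (T b) (g b) (c b) else c b) a
            (myrho (T a) (g a) (c a)) := by
        funext b
        rcases eq_or_ne b a with rfl | hb
        · simp
        · simp [Function.update_of_ne hb, hb]
      rw [hfun]
      by_cases hal : a ∈ l
      · have h2 : (fun b => if b ∈ l then myrho (T b) (g b) (c b) else c b) a
            = myrho (T a) (g a) (c a) := by simp [hal]
        rw [← h2, Function.update_eq_self]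
        exact ih
      · have hfa : (fun b => if b ∈ l then myrho (T b) (g b) (c b) else c b) a = c a := by
          simp [hal]
        rcases myrho_spec (T a) (g a) (c a) with heq | ⟨h1, h2, h3⟩
        · rw [heq, ← hfa, Function.update_eq_self]
          exact ih
        · rw [hSupd _ a _ h1 (by simpa [hal] using h2) (by simpa [hal] using h3)]
          exact ih
  -- shuffle characterization through counts
  have hshuffle : ∀ w : List α, (w ∈ Shuffle U V ↔ S (fun a => w.count a)) := by
    intro w
    constructor
    · rintro ⟨u, hu, v, hv, hs⟩
      refine ⟨fun a => u.count a, fun a => v.count a, fun a => (isShuffleX_count hs a).symm,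
        (hmemU u).mp hu, (hmemV v).mp hv⟩
    · rintro ⟨x, y, hsum, hFx, hGy⟩
      obtain ⟨u, v, hs, hu, hv⟩ := exists_isShuffleX_of_counts w x y hsum
      refine ⟨u, ?_, v, ?_, hs⟩
      · rw [hmemU u]
        have : (fun a => u.count a) = x := funext hu
        rw [this]; exact hFx
      · rw [hmemV v]
        have : (fun a => v.count a) = y := funext hv
        rw [this]; exact hGy
  -- the automaton
  have hrholt : ∀ (a : α) (c : ℕ), myrho (T a) (g a) c < T a + g a :=
    fun a c => myrho_lt _ _ _ (hg0 a)
  let nrm : (a : α) → ℕ → Fin (T a + g a) := fun a c => ⟨myrho (T a) (g a) c, hrholt a c⟩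
  let M' : DFA α (∀ a : α, Fin (T a + g a)) :=
    { step := fun s a => Function.update s a (nrm a ((s a : ℕ) + 1)),
      start := fun a => nrm a 0,
      accept := {s | S fun a => (s a : ℕ)} }
  have heval : ∀ w : List α, M'.eval w = fun a => nrm a (w.count a) := by
    intro w
    induction w using List.reverseRecOn with
    | nil =>
      funext a
      show nrm a 0 = nrm a (List.count a [])
      rw [List.count_nil]
    | append_singleton w b ih =>
      rw [DFA.eval_append_singleton, ih]
      funext a
      show Function.update (fun a' => nrm a' (List.count a' w)) b
        (nrm b (((fun a' => nrm a' (List.count a' w)) b : Fin (T b + g b)) + 1 : ℕ)) a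
        = nrm a (List.count a (w ++ [b]))
      rcases eq_or_ne a b with rfl | hab
      · rw [Function.update_self]
        apply Fin.ext
        show myrho (T a) (g a) (myrho (T a) (g a) (w.count a) + 1) = _
        rw [myrho_succ _ _ _ (hg0 a)]
        have : List.count a (w ++ [a]) = w.count a + 1 := by
          simp [List.count_append]
        rw [this]
      · rw [Function.update_of_ne hab]
        have : List.count a (w ++ [b]) = w.count a := by
          simp [List.count_append, List.count_singleton', Ne.symm hab]
        rw [this]
  refine ⟨∀ a : α, Fin (T a + g a), inferInstance, M', ?_, ?_⟩
  · -- cardinality bound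
    have hbound : ∀ a : α, T a + g a ≤ n * m := by
      intro a
      have h1 : T a + g a + 2 = g a * d' a * e' a + 2 * g a := by
        have := hT2 a; omega
      have h2 : g a * d' a * e' a + 2 * g a ≤ d a * e a + 2 := by
        rw [hdfac a, hefac a]
        have hd1 : 1 ≤ d' a := hd'0 a
        have he1 : 1 ≤ e' a := he'0 a
        have hg1 : 1 ≤ g a := hg0 a
        rcases eq_or_lt_of_le hg1 with hg' | hg'
        · rw [← hg']
          have he : 1 * d' a * e' a + 2 * 1 = 1 * d' a * (1 * e' a) + 2 := by ring
          exact he.le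
        · zify
          have c1 : (0:ℤ) ≤ (g a : ℤ) - 1 := by
            have : (2:ℤ) ≤ (g a : ℤ) := by exact_mod_cast hg'
            linarith
          have c2 : (0:ℤ) ≤ (g a : ℤ) * (d' a : ℤ) * (e' a : ℤ) - 2 := by
            have t1 : g a ≤ g a * d' a := Nat.le_mul_of_pos_right _ (hd'0 a)
            have t2 : g a * d' a ≤ g a * d' a * e' a := Nat.le_mul_of_pos_right _ (he'0 a)
            have t3 : 2 ≤ g a * d' a * e' a := le_trans hg' (le_trans t1 t2)
            have t4 : (2:ℤ) ≤ (g a : ℤ) * (d' a : ℤ) * (e' a : ℤ) := by exact_mod_cast t3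
            linarith
          nlinarith [mul_nonneg c1 c2]
      have h3 : d a * e a ≤ n * m := Nat.mul_le_mul (hdn a) (hem a)
      omega
    rw [Fintype.card_pi]
    calc (∏ a : α, Fintype.card (Fin (T a + g a))) = ∏ a : α, (T a + g a) := by simp
      _ ≤ ∏ _a : α, (n * m) :=
          Finset.prod_le_prod (fun _ _ => Nat.zero_le _) (fun a _ => hbound a)
      _ = (n * m) ^ k := by rw [Finset.prod_const, Finset.card_univ, hk]
  · -- accepted language
    ext w
    rw [DFA.mem_accepts, heval w]
    show (S fun a => (myrho (T a) (g a) (w.count a))) ↔ _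
    rw [hSrho (fun a => w.count a)]
    exact (hshuffle w).symm
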